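/- Let P be a polyhedron in ℝⁿ × ℝ (an epigraph of a polyhedral convex function) and let F₁, F₂ be non-vertical faces of P with nonempty intersection. Then F₁ ∩ F₂ is a non-vertical face of P, and its projection to ℝⁿ equals the intersection of the projections of F₁ and F₂. -/

import Mathlib

noncomputable section
open Set

abbrev V (n : ℕ) := EuclideanSpace ℝ (Fin n)

/-- A polyhedron: finite intersection of closed half-spaces. -/
def IsPolyhedron {E : Type*} [AddCommGroup E] [Module ℝ E] (P : Set E) : Prop :=
  ∃ (m : ℕ) (L : Fin m → E →ₗ[ℝ] ℝ) (b : Fin m → ℝ), P = {x | ∀ i, L i x ≤ b i}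

/-- Epigraph of a real-valued function. -/
def epi {n : ℕ} (g : V n → ℝ) : Set (V n × ℝ) := {p | g p.1 ≤ p.2}

/-- `F` is a non-vertical face of `P`: an exposed face, nonempty, whose affine hull
does not contain the vertical direction `(0, 1)`. -/
def NonVerticalFace {n : ℕ} (P F : Set (V n × ℝ)) : Prop :=
  IsExposed ℝ P F ∧ F.Nonempty ∧
    ((0 : V n), (1 : ℝ)) ∉ (affineSpan ℝ F).direction

/-- A non-vertical face of an epigraph lies in the graph. -/
lemma nvf_graph {n : ℕ} {g : V n → ℝ} {F : Set (V n × ℝ)}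
    (hF : NonVerticalFace (epi g) F) {w : V n} {z : ℝ} (h : (w, z) ∈ F) : z = g w := by
  obtain ⟨hexp, hneF, hdir⟩ := hF
  obtain ⟨l, hl⟩ := hexp hneF
  have hmem : (w, z) ∈ { x ∈ epi g | ∀ y ∈ epi g, l y ≤ l x } := hl ▸ h
  have hwz : g w ≤ z := hmem.1
  rcases eq_or_lt_of_le hwz with heq | hlt
  · exact heq.symm
  exfalso
  -- l (0,1) ≤ 0 from the point (w, z+1)
  have key : ∀ s : ℝ, g w ≤ s → l (w, s) ≤ l (w, z) := fun s hs =>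
    hmem.2 (w, s) hs
  have hsplit : ∀ s : ℝ, l (w, s) = l (w, z) + (s - z) * l (0, 1) := by
    intro s
    have : (w, s) = (w, z) + (s - z) • ((0 : V n), (1 : ℝ)) := by
      simp [Prod.ext_iff]
    rw [this, map_add, map_smul, smul_eq_mul]
  have h1 : l (0, 1) ≤ 0 := by
    have := key (z + 1) (by linarith)
    rw [hsplit (z + 1)] at this
    nlinarith
  have h2 : 0 ≤ l (0, 1) := by
    have := key (g w) le_rfl
    rw [hsplit (g w)] at this
    nlinarith
  have h0 : l ((0 : V n), (1 : ℝ)) = 0 := le_antisymm h1 h2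
  -- then (w, g w) ∈ F as well
  have hgm : (w, g w) ∈ F := by
    rw [hl]
    refine ⟨show g w ≤ g w from le_rfl, fun y hy => ?_⟩
    rw [hsplit (g w), h0]
    simpa using hmem.2 y hy
  have hv : ((0 : V n), z - g w) ∈ (affineSpan ℝ F).direction := by
    have := AffineSubspace.vsub_mem_direction (subset_affineSpan ℝ F h)
      (subset_affineSpan ℝ F hgm)
    simpa [Prod.ext_iff] using this
  have : ((0 : V n), (1 : ℝ)) ∈ (affineSpan ℝ F).direction := by
    have := Submodule.smul_mem _ ((z - g w)⁻¹) hv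
    have hzz : (z - g w : ℝ) ≠ 0 := by linarith
    simpa [Prod.smul_mk, smul_eq_mul, inv_mul_cancel₀ hzz] using this
  exact hdir this

/-- the intersection of two non-vertical faces of the epigraph of
a polyhedral convex function, if nonempty, is a non-vertical face, and its
projection is the intersection of the projections. -/
theorem stmt19 (n : ℕ) (g : V n → ℝ)
    (hconv : ConvexOn ℝ univ g) (hpoly : IsPolyhedron (epi g))
    (F₁ F₂ : Set (V n × ℝ))
    (h₁ : NonVerticalFace (epi g) F₁) (h₂ : NonVerticalFace (epi g) F₂)
    (hne : (F₁ ∩ F₂).Nonempty) :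
    NonVerticalFace (epi g) (F₁ ∩ F₂) ∧
      Prod.fst '' (F₁ ∩ F₂) = (Prod.fst '' F₁) ∩ (Prod.fst '' F₂) := by
  have h₁' := h₁
  have h₂' := h₂
  obtain ⟨hexp₁, hne₁, hdir₁⟩ := h₁
  obtain ⟨hexp₂, hne₂, hdir₂⟩ := h₂
  refine ⟨⟨hexp₁.inter hexp₂, hne, fun hmem => ?_⟩, ?_⟩
  · exact hdir₁ (AffineSubspace.direction_le
      (affineSpan_mono ℝ (inter_subset_left : F₁ ∩ F₂ ⊆ F₁)) hmem)
  · apply Subset.antisymm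
    · exact subset_inter (image_mono (f := _) inter_subset_left)
        (image_mono (f := _) inter_subset_right)
    · rintro w ⟨⟨p, hp, hp1⟩, ⟨q, hq, hq1⟩⟩
      have hp' : (w, g w) ∈ F₁ := by
        have := nvf_graph h₁' (show (p.1, p.2) ∈ F₁ by simpa using hp)
        rw [hp1] at this
        have hpe : p = (w, g w) := Prod.ext hp1 this
        rw [← hpe]; exact hp
      have hq' : (w, g w) ∈ F₂ := by
        have := nvf_graph h₂' (show (q.1, q.2) ∈ F₂ by simpa using hq)
        rw [hq1] at this
        have hqe : q = (w, g w) := Prod.ext hq1 this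
        rw [← hqe]; exact hq
      exact ⟨(w, g w), ⟨hp', hq'⟩, rfl⟩
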